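/- In the free Baxter algebra of weight λ on one generator x (the mixable shuffle algebra on C[x]), for every n ≥ 1, (1⊗x)^n = ∑_{I} S(n,I) · (1 ⊗ x^{i_1} ⊗ ⋯ ⊗ x^{i_k}), where the sum is over compositions I = (i_1,…,i_k) of n into positive parts, and S(n,I) = (n choose i_1,…,i_k) · λ^{n-k} (multinomial coefficient times λ^{n-ℓ(I)}). -/

import Mathlib

namespace MixAux
open Finset

variable {α β : Type*}

/-- Insert `x` at index `j`. -/
def insL (x : α) : ℕ → List α → List α
  | 0, l => x :: l
  | _+1, [] => [x]
  | j+1, a :: l => a :: insL x j l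

/-- Apply `f` at index `j`. -/
def modL (f : α → α) : ℕ → List α → List α
  | _, [] => []
  | 0, a :: l => f a :: l
  | j+1, a :: l => a :: modL f j l

/-- Delete entry at index `j`. -/
def delL : ℕ → List α → List α
  | _, [] => []
  | 0, _ :: l => l
  | j+1, a :: l => a :: delL j l

@[simp] lemma insL_zero (x : α) (l : List α) : insL x 0 l = x :: l := rfl
@[simp] lemma insL_succ_nil (x : α) (j : ℕ) : insL x (j+1) ([] : List α) = [x] := rfl
@[simp] lemma insL_succ_cons (x a : α) (j : ℕ) (l : List α) :
    insL x (j+1) (a :: l) = a :: insL x j l := rfl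
@[simp] lemma modL_nil (f : α → α) (j : ℕ) : modL f j ([] : List α) = [] := by cases j <;> rfl
@[simp] lemma modL_zero (f : α → α) (a : α) (l : List α) : modL f 0 (a :: l) = f a :: l := rfl
@[simp] lemma modL_succ_cons (f : α → α) (a : α) (j : ℕ) (l : List α) :
    modL f (j+1) (a :: l) = a :: modL f j l := rfl
@[simp] lemma delL_nil (j : ℕ) : delL j ([] : List α) = [] := by cases j <;> rfl
@[simp] lemma delL_zero (a : α) (l : List α) : delL 0 (a :: l) = l := rfl
@[simp] lemma delL_succ_cons (a : α) (j : ℕ) (l : List α) :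
    delL (j+1) (a :: l) = a :: delL j l := rfl

lemma length_insL (x : α) : ∀ (j : ℕ) (l : List α), (insL x j l).length = l.length + 1
  | 0, _ => rfl
  | _+1, [] => rfl
  | j+1, a :: l => by simp [length_insL x j l]

lemma length_modL (f : α → α) : ∀ (j : ℕ) (l : List α), (modL f j l).length = l.length
  | _, [] => by simp
  | 0, a :: l => rfl
  | j+1, a :: l => by simp [length_modL f j l]

lemma length_delL : ∀ (j : ℕ) (l : List α), j < l.length → (delL j l).length + 1 = l.length
  | _, [], h => by simp at h
  | 0, a :: l, _ => by simp
  | j+1, a :: l, h => by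
      simp only [delL_succ_cons, List.length_cons]
      rw [Nat.add_right_comm, length_delL j l (by simpa using h)]

lemma mem_insL (x y : α) : ∀ (j : ℕ) (l : List α), y ∈ insL x j l → y = x ∨ y ∈ l
  | 0, l, h => by simpa using h
  | _+1, [], h => by simpa using h
  | j+1, a :: l, h => by
      simp only [insL_succ_cons, List.mem_cons] at h
      rcases h with h | h
      · exact Or.inr (by simp [h])
      · rcases mem_insL x y j l h with h' | h'
        · exact Or.inl h'
        · exact Or.inr (by simp [h'])

lemma mem_modL (f : ℕ → ℕ) (y : ℕ) : ∀ (j : ℕ) (l : List ℕ),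
    y ∈ modL f j l → y ∈ l ∨ (j < l.length ∧ y = f (l.getD j 0))
  | _, [], h => by simp at h
  | 0, a :: l, h => by
      simp only [modL_zero, List.mem_cons] at h
      rcases h with h | h
      · exact Or.inr ⟨by simp, by simpa using h⟩
      · exact Or.inl (by simp [h])
  | j+1, a :: l, h => by
      simp only [modL_succ_cons, List.mem_cons] at h
      rcases h with h | h
      · exact Or.inl (by simp [h])
      · rcases mem_modL f y j l h with h' | ⟨h1, h2⟩
        · exact Or.inl (by simp [h'])
        · exact Or.inr ⟨by simpa using h1, by simpa using h2⟩

lemma mem_delL (y : α) : ∀ (j : ℕ) (l : List α), y ∈ delL j l → y ∈ l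
  | _, [], h => by simp at h
  | 0, a :: l, h => by
      simp only [delL_zero] at h
      exact List.mem_cons_of_mem a h
  | j+1, a :: l, h => by
      simp only [delL_succ_cons, List.mem_cons] at h ⊢
      rcases h with h | h
      · exact Or.inl h
      · exact Or.inr (mem_delL y j l h)

lemma getD_insL (x d : α) : ∀ (j : ℕ) (l : List α), j ≤ l.length → (insL x j l).getD j d = x
  | 0, l, _ => rfl
  | j+1, [], h => by simp at h
  | j+1, a :: l, h => by simpa using getD_insL x d j l (by simpa using h)

lemma getD_modL (f : α → α) (d : α) : ∀ (j : ℕ) (l : List α), j < l.length →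
    (modL f j l).getD j d = f (l.getD j d)
  | _, [], h => by simp at h
  | 0, a :: l, _ => rfl
  | j+1, a :: l, h => by simpa using getD_modL f d j l (by simpa using h)

lemma delL_insL (x : α) : ∀ (j : ℕ) (l : List α), j ≤ l.length → delL j (insL x j l) = l
  | 0, l, _ => rfl
  | j+1, [], h => by simp at h
  | j+1, a :: l, h => by simp [delL_insL x j l (by simpa using h)]

lemma insL_delL (x d : α) : ∀ (j : ℕ) (l : List α), j < l.length → l.getD j d = x →
    insL x j (delL j l) = l
  | _, [], h, _ => by simp at h
  | 0, a :: l, _, h2 => by simp at h2; simp [h2]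
  | j+1, a :: l, h, h2 => by
      simp [insL_delL x d j l (by simpa using h) (by simpa using h2)]

lemma modL_insL (f : α → α) (x : α) : ∀ (j : ℕ) (l : List α), j ≤ l.length →
    modL f j (insL x j l) = insL (f x) j l
  | 0, l, _ => rfl
  | j+1, [], h => by simp at h
  | j+1, a :: l, h => by simp [modL_insL f x j l (by simpa using h)]

lemma modL_cancel : ∀ (j : ℕ) (l : List ℕ), modL (· - 1) j (modL (· + 1) j l) = l
  | _, [] => by simp
  | 0, a :: l => by simp
  | j+1, a :: l => by simp [modL_cancel j l]

lemma modL_cancel' : ∀ (j : ℕ) (l : List ℕ), j < l.length → 1 ≤ l.getD j 0 →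
    modL (· + 1) j (modL (· - 1) j l) = l
  | _, [], h, _ => by simp at h
  | 0, a :: l, _, h2 => by simp at h2 ⊢; omega
  | j+1, a :: l, h, h2 => by
      simp [modL_cancel' j l (by simpa using h) (by simpa using h2)]

lemma map_insL (g : α → β) (x : α) : ∀ (j : ℕ) (l : List α),
    (insL x j l).map g = insL (g x) j (l.map g)
  | 0, l => rfl
  | _+1, [] => rfl
  | j+1, a :: l => by simp [map_insL g x j l]

lemma map_modL (g : α → β) (f : α → α) (f' : β → β) (h : ∀ a, g (f a) = f' (g a)) :
    ∀ (j : ℕ) (l : List α), (modL f j l).map g = modL f' j (l.map g)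
  | _, [] => by simp
  | 0, a :: l => by simp [h]
  | j+1, a :: l => by simp [map_modL g f f' h j l]

lemma sum_insL (x : ℕ) : ∀ (j : ℕ) (l : List ℕ), (insL x j l).sum = x + l.sum
  | 0, l => rfl
  | _+1, [] => by simp
  | j+1, a :: l => by simp [sum_insL x j l]; omega

lemma prod_insL (x : ℕ) : ∀ (j : ℕ) (l : List ℕ), (insL x j l).prod = x * l.prod
  | 0, l => rfl
  | _+1, [] => by simp
  | j+1, a :: l => by simp [prod_insL x j l]; ring

lemma sum_incL : ∀ (j : ℕ) (l : List ℕ), j < l.length → (modL (· + 1) j l).sum = l.sum + 1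
  | _, [], h => by simp at h
  | 0, a :: l, _ => by simp; omega
  | j+1, a :: l, h => by simp [sum_incL j l (by simpa using h)]; omega

lemma sum_decL : ∀ (j : ℕ) (l : List ℕ), j < l.length → 1 ≤ l.getD j 0 →
    (modL (· - 1) j l).sum + 1 = l.sum
  | _, [], h, _ => by simp at h
  | 0, a :: l, _, h2 => by simp at h2 ⊢; omega
  | j+1, a :: l, h, h2 => by
      have := sum_decL j l (by simpa using h) (by simpa using h2)
      simp; omega

lemma sum_delL : ∀ (j : ℕ) (l : List ℕ), j < l.length → (delL j l).sum + l.getD j 0 = l.sum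
  | _, [], h => by simp at h
  | 0, a :: l, _ => by simp; omega
  | j+1, a :: l, h => by
      have := sum_delL j l (by simpa using h)
      simp at this ⊢; omega

lemma sum_getD : ∀ l : List ℕ, ∑ j ∈ Finset.range l.length, l.getD j 0 = l.sum
  | [] => by simp
  | a :: l => by
      rw [List.length_cons, Finset.sum_range_succ']
      have := sum_getD l
      simp at this ⊢; omega

lemma getD_mem : ∀ (j : ℕ) (l : List ℕ), j < l.length → l.getD j 0 ∈ l
  | _, [], h => by simp at h
  | 0, a :: l, _ => by simp
  | j+1, a :: l, h => by simpa using Or.inr (getD_mem j l (by simpa using h))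

end MixAux
namespace MixAux
open Finset Nat

/-- Multinomial coefficient of a list. -/
def Ml (l : List ℕ) : ℕ := Nat.multinomial (Finset.univ : Finset (Fin l.length)) l.get

lemma map_prod_eq (l : List ℕ) (g : ℕ → ℕ) : (l.map g).prod = ∏ i : Fin l.length, g (l.get i) := by
  conv_lhs => rw [← List.ofFn_get l]
  rw [List.map_ofFn, List.prod_ofFn]
  rfl

lemma sum_eq_fin (l : List ℕ) : l.sum = ∑ i : Fin l.length, l.get i := by
  conv_lhs => rw [← List.ofFn_get l]
  rw [List.sum_ofFn]

lemma Ml_spec (l : List ℕ) : (l.map Nat.factorial).prod * Ml l = (l.sum)! := by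
  rw [map_prod_eq, sum_eq_fin]
  exact Nat.multinomial_spec _ _

lemma factprod_pos (l : List ℕ) : 0 < (l.map Nat.factorial).prod :=
  List.prod_pos (by intro x hx; rcases List.mem_map.mp hx with ⟨a, _, rfl⟩; exact Nat.factorial_pos a)

lemma Ml_eq_of {l1 l2 : List ℕ} (h1 : (l1.map Nat.factorial).prod = (l2.map Nat.factorial).prod)
    (h2 : l1.sum = l2.sum) : Ml l1 = Ml l2 := by
  have := Ml_spec l1
  rw [h1, h2, ← Ml_spec l2] at this
  exact Nat.eq_of_mul_eq_mul_left (factprod_pos l2) this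

lemma Ml_dec_insL {j : ℕ} {l : List ℕ} (hj : j ≤ l.length) :
    Ml (modL (· - 1) j (insL 1 j l)) = Ml l := by
  rw [modL_insL _ _ _ _ hj]
  apply Ml_eq_of
  · rw [map_insL, prod_insL]
    norm_num
  · rw [sum_insL]
    norm_num

lemma fact_prod_dec : ∀ (j : ℕ) (l : List ℕ), j < l.length → 1 ≤ l.getD j 0 →
    (l.map Nat.factorial).prod = l.getD j 0 * ((modL (· - 1) j l).map Nat.factorial).prod
  | _, [], h, _ => by simp at h
  | 0, a :: l, _, h2 => by
      simp only [List.getD_cons_zero] at h2 ⊢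
      simp only [modL_zero, List.map_cons, List.prod_cons]
      rw [← mul_assoc, Nat.mul_factorial_pred (by omega)]
  | j+1, a :: l, h, h2 => by
      rw [List.getD_cons_succ] at h2 ⊢
      have := fact_prod_dec j l (by simpa using h) h2
      simp only [modL_succ_cons, List.map_cons, List.prod_cons, this]
      ring

lemma pascal (l : List ℕ) (hne : l ≠ []) (hpos : ∀ x ∈ l, 1 ≤ x) :
    ∑ j ∈ Finset.range l.length, Ml (modL (· - 1) j l) = Ml l := by
  have hsum : 1 ≤ l.sum := by
    cases l with
    | nil => simp at hne
    | cons a t => have := hpos a (by simp); simp [List.sum_cons]; omega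
  apply Nat.eq_of_mul_eq_mul_left (factprod_pos l)
  rw [Finset.mul_sum, Ml_spec]
  have key : ∀ j ∈ Finset.range l.length,
      (l.map Nat.factorial).prod * Ml (modL (· - 1) j l) = l.getD j 0 * (l.sum - 1)! := by
    intro j hj
    rw [Finset.mem_range] at hj
    have hp1 : 1 ≤ l.getD j 0 := hpos _ (getD_mem j l hj)
    rw [fact_prod_dec j l hj hp1, mul_assoc, Ml_spec]
    have : (modL (· - 1) j l).sum = l.sum - 1 := by
      have := sum_decL j l hj hp1; omega
    rw [this]
  rw [Finset.sum_congr rfl key, ← Finset.sum_mul, sum_getD]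
  exact Nat.mul_factorial_pred (by omega)

end MixAux

/-- The mixable shuffle product of weight `lam` on pure tensors of `⊕_{n≥1} A^{⊗n}`:
a pure tensor `a₁ ⊗ ⋯ ⊗ aₙ` is encoded as the list `[a₁, …, aₙ]`, and a general element of
`⊕_{n≥1} A^{⊗n}` as a formal `C`-linear combination of such lists (`List A →₀ C`). -/
noncomputable def mixShuffle {C A : Type*} [CommRing C] [CommRing A] (lam : C) :
    List A → List A → (List A →₀ C)
  | [], _ => 0
  | _ :: _, [] => 0
  | [a], b :: bs => Finsupp.single ((a * b) :: bs) 1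
  | a :: a2 :: as, [b] => Finsupp.single ((a * b) :: a2 :: as) 1
  | a :: a2 :: as, b :: b2 :: bs =>
      Finsupp.mapDomain (List.cons (a * b))
        (mixShuffle lam (a2 :: as) (1 :: b2 :: bs) +
          mixShuffle lam (1 :: a2 :: as) (b2 :: bs) +
          lam • mixShuffle lam (a2 :: as) (b2 :: bs))
  termination_by l1 l2 => l1.length + l2.length
  decreasing_by all_goals simp <;> omega

/-- The bilinear extension of the mixable shuffle product to
`⊕_{n≥1} A^{⊗n}`, modelled as `List A →₀ C`. -/
noncomputable def mixShuffleL {C A : Type*} [CommRing C] [CommRing A] (lam : C)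
    (f g : List A →₀ C) : List A →₀ C :=
  f.sum fun l1 c1 => g.sum fun l2 c2 => (c1 * c2) • mixShuffle lam l1 l2

/-- `n`-th power with respect to the mixable shuffle product (defined for `n ≥ 1`). -/
noncomputable def mixShufflePow {C A : Type*} [CommRing C] [CommRing A] (lam : C)
    (f : List A →₀ C) : ℕ → (List A →₀ C)
  | 0 => 0
  | 1 => f
  | n + 2 => mixShuffleL lam (mixShufflePow lam f (n + 1)) f

namespace MixAux
open Finset

variable {C A : Type*} [CommRing C] [CommRing A] (lam : C)

lemma shuffle_single (w x : A) (ws : List A) :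
    mixShuffle lam (w :: ws) [x] = Finsupp.single ((w * x) :: ws) (1 : C) := by
  cases ws <;> simp [mixShuffle]

lemma shuffle_T (x : A) : ∀ (us : List A) (u : A),
    mixShuffle lam (u :: us) [1, x] =
      (∑ j ∈ Finset.range (us.length + 1), Finsupp.single (u :: insL x j us) (1 : C))
        + lam • ∑ j ∈ Finset.range us.length, Finsupp.single (u :: modL (· * x) j us) (1 : C) := by
  intro us
  induction us with
  | nil =>
      intro u
      simp [mixShuffle]
  | cons v vs ih =>
      intro u
      have hunf : mixShuffle lam (u :: v :: vs) [1, x] =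
          Finsupp.mapDomain (List.cons (u * 1))
            (mixShuffle lam (v :: vs) (1 :: x :: []) +
              mixShuffle lam (1 :: v :: vs) (x :: []) +
              lam • mixShuffle lam (v :: vs) (x :: [])) := by
        conv_lhs => rw [mixShuffle]
      rw [hunf, ih v, shuffle_single, shuffle_single, one_mul, mul_one]
      rw [Finsupp.mapDomain_add, Finsupp.mapDomain_add, Finsupp.mapDomain_smul,
        Finsupp.mapDomain_add, Finsupp.mapDomain_smul,
        Finsupp.mapDomain_finset_sum, Finsupp.mapDomain_finset_sum,
        Finsupp.mapDomain_single, Finsupp.mapDomain_single]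
      simp only [Finsupp.mapDomain_single]
      rw [List.length_cons, Finset.sum_range_succ' (fun j => Finsupp.single (u :: insL x j (v :: vs)) (1 : C)),
        Finset.sum_range_succ' (fun j => Finsupp.single (u :: modL (· * x) j (v :: vs)) (1 : C))]
      simp only [insL_succ_cons, insL_zero, modL_succ_cons, modL_zero]
      rw [smul_add]
      abel
end MixAux
namespace MixAux
open Finset

variable {C A : Type*} [CommRing C] [CommRing A] (lam : C)

lemma shuffle_main (x : A) (L : List A) (hL : L ≠ []) :
    mixShuffle lam ((1 : A) :: L) [1, x] =
      (∑ j ∈ Finset.range (L.length + 1), Finsupp.single ((1 : A) :: insL x j L) (1 : C))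
        + lam • ∑ j ∈ Finset.range L.length, Finsupp.single ((1 : A) :: modL (· * x) j L) (1 : C) := by
  cases L with
  | nil => exact absurd rfl hL
  | cons u us =>
      have hunf : mixShuffle lam ((1 : A) :: u :: us) [1, x] =
          Finsupp.mapDomain (List.cons ((1 : A) * 1))
            (mixShuffle lam (u :: us) (1 :: x :: []) +
              mixShuffle lam ((1 : A) :: u :: us) (x :: []) +
              lam • mixShuffle lam (u :: us) (x :: [])) := by
        conv_lhs => rw [mixShuffle]
      rw [hunf, shuffle_T, shuffle_single, shuffle_single, one_mul, one_mul]
      rw [Finsupp.mapDomain_add, Finsupp.mapDomain_add, Finsupp.mapDomain_smul,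
        Finsupp.mapDomain_add, Finsupp.mapDomain_smul,
        Finsupp.mapDomain_finset_sum, Finsupp.mapDomain_finset_sum,
        Finsupp.mapDomain_single, Finsupp.mapDomain_single]
      simp only [Finsupp.mapDomain_single]
      rw [List.length_cons,
        Finset.sum_range_succ' (fun j => Finsupp.single ((1 : A) :: insL x j (u :: us)) (1 : C)),
        Finset.sum_range_succ' (fun j => Finsupp.single ((1 : A) :: modL (· * x) j (u :: us)) (1 : C))]
      simp only [insL_succ_cons, insL_zero, modL_succ_cons, modL_zero]
      rw [smul_add]
      abel

lemma mixShuffleL_single (f : List A →₀ C) (l : List A) :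
    mixShuffleL lam f (Finsupp.single l 1) = f.sum fun l1 c1 => c1 • mixShuffle lam l1 l := by
  unfold mixShuffleL
  apply Finsupp.sum_congr
  intro l1 _
  rw [Finsupp.sum_single_index (by simp), mul_one]

lemma mixShuffleL_finsetsum {ι : Type*} (s : Finset ι) (t : ι → List A) (a : ι → C) (l : List A) :
    mixShuffleL lam (∑ i ∈ s, Finsupp.single (t i) (a i)) (Finsupp.single l 1)
      = ∑ i ∈ s, a i • mixShuffle lam (t i) l := by
  rw [mixShuffleL_single]
  rw [← Finsupp.sum_finset_sum_index (by intro a; exact zero_smul _ _)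
    (by intro a b1 b2; exact add_smul _ _ _)]
  refine Finset.sum_congr rfl fun i _ => ?_
  exact Finsupp.sum_single_index (zero_smul _ _)

lemma pow_succ_eq (f : List A →₀ C) {n : ℕ} (hn : 1 ≤ n) :
    mixShufflePow lam f (n + 1) = mixShuffleL lam (mixShufflePow lam f n) f := by
  cases n with
  | zero => omega
  | succ m => rfl

end MixAux
namespace MixAux
open Finset Polynomial

/-- Insert a new block `1` at position `j`. -/
def insC {n : ℕ} (c : Composition n) (j : ℕ) : Composition (n + 1) where
  blocks := insL 1 j c.blocks
  blocks_pos := by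
    intro i hi
    rcases mem_insL 1 i j c.blocks hi with h | h
    · omega
    · exact c.blocks_pos h
  blocks_sum := by rw [sum_insL, c.blocks_sum]; omega

/-- Increment the block at position `j`. -/
def incC {n : ℕ} (c : Composition n) (j : ℕ) (hj : j < c.blocks.length) : Composition (n + 1) where
  blocks := modL (· + 1) j c.blocks
  blocks_pos := by
    intro i hi
    rcases mem_modL _ i j c.blocks hi with h | ⟨_, h2⟩
    · exact c.blocks_pos h
    · omega
  blocks_sum := by rw [sum_incL j c.blocks hj, c.blocks_sum]

/-- Delete the (size-one) block at position `j`. -/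
def delC {n : ℕ} (c : Composition (n + 1)) (j : ℕ) (hj : j < c.blocks.length)
    (h1 : c.blocks.getD j 0 = 1) : Composition n where
  blocks := delL j c.blocks
  blocks_pos := fun hi => c.blocks_pos (mem_delL _ _ _ hi)
  blocks_sum := by
    have h := sum_delL j c.blocks hj
    have hs := c.blocks_sum
    omega

/-- Decrement the block at position `j`. -/
def decC {n : ℕ} (c : Composition (n + 1)) (j : ℕ) (hj : j < c.blocks.length)
    (h2 : 2 ≤ c.blocks.getD j 0) : Composition n where
  blocks := modL (· - 1) j c.blocks
  blocks_pos := by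
    intro i hi
    rcases mem_modL _ i j c.blocks hi with h | ⟨_, h2'⟩
    · exact c.blocks_pos h
    · omega
  blocks_sum := by
    have h := sum_decL j c.blocks hj (by omega)
    have hs := c.blocks_sum
    omega

lemma delC_insC {n : ℕ} (c : Composition n) (j : ℕ) (hj : j < (insC c j).blocks.length)
    (h1 : (insC c j).blocks.getD j 0 = 1) : delC (insC c j) j hj h1 = c := by
  apply Composition.ext
  have : (insC c j).blocks.length = c.blocks.length + 1 := length_insL 1 j c.blocks
  exact delL_insL 1 j c.blocks (by omega)

lemma insC_delC {n : ℕ} (c : Composition (n + 1)) (j : ℕ) (hj : j < c.blocks.length)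
    (h1 : c.blocks.getD j 0 = 1) : insC (delC c j hj h1) j = c := by
  apply Composition.ext
  exact insL_delL 1 0 j c.blocks hj h1

lemma decC_incC {n : ℕ} (c : Composition n) (j : ℕ) (hj : j < c.blocks.length)
    (hj2 : j < (incC c j hj).blocks.length) (h2 : 2 ≤ (incC c j hj).blocks.getD j 0) :
    decC (incC c j hj) j hj2 h2 = c := by
  apply Composition.ext
  exact modL_cancel j c.blocks

lemma incC_decC {n : ℕ} (c : Composition (n + 1)) (j : ℕ) (hj : j < c.blocks.length)
    (h2 : 2 ≤ c.blocks.getD j 0) (hj2 : j < (decC c j hj h2).blocks.length) :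
    incC (decC c j hj h2) j hj2 = c := by
  apply Composition.ext
  exact modL_cancel' j c.blocks hj (by omega)

lemma blocks_ne_nil {n : ℕ} (hn : 1 ≤ n) (c : Composition n) : c.blocks ≠ [] := by
  intro h
  have := c.blocks_sum
  rw [h] at this
  simp at this
  omega

theorem aux {C : Type*} [CommRing C] (lam : C) : ∀ n : ℕ, 1 ≤ n →
    mixShufflePow lam (Finsupp.single [(1 : Polynomial C), X] (1 : C)) n =
      ∑ c : Composition n,
        Finsupp.single ((1 : Polynomial C) :: c.blocks.map (fun i => (X : Polynomial C) ^ i))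
          ((Ml c.blocks : C) * lam ^ (n - c.blocks.length)) := by
  intro n hn
  induction n, hn using Nat.le_induction with
  | base =>
      have hb : ∀ c : Composition 1, c.blocks = [1] := by
        rintro ⟨bl, hpos, hsum⟩
        cases bl with
        | nil => simp at hsum
        | cons a t =>
            cases t with
            | nil => simp at hsum ⊢; omega
            | cons b t2 =>
                exfalso
                have ha : 0 < a := hpos (by simp)
                have hbpos : 0 < b := hpos (by simp)
                have ht : 0 ≤ t2.sum := Nat.zero_le _
                simp [List.sum_cons] at hsum
                omega
      have huniv : (Finset.univ : Finset (Composition 1)) = {Composition.single 1 one_pos} := by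
        apply Finset.eq_singleton_iff_unique_mem.mpr
        refine ⟨Finset.mem_univ _, fun c _ => ?_⟩
        apply Composition.ext
        rw [hb c]
        rfl
      have hM : Ml [1] = 1 := by
        have := Ml_spec [1]
        simp [Nat.factorial] at this
        omega
      show Finsupp.single [(1 : Polynomial C), X] (1 : C) = _
      rw [huniv, Finset.sum_singleton]
      show _ = Finsupp.single ((1 : Polynomial C) :: [1].map (fun i => (X : Polynomial C) ^ i))
          ((Ml [1] : C) * lam ^ (1 - ([1] : List ℕ).length))
      simp [hM]
  | succ n hn ih =>
      rw [pow_succ_eq lam _ hn, ih, mixShuffleL_finsetsum]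
      have hbne : ∀ c : Composition n, c.blocks ≠ [] := blocks_ne_nil hn
      have h1l : ∀ (c : Composition n) (j : ℕ),
          insL X j (c.blocks.map (fun i => (X : Polynomial C) ^ i))
            = (insL 1 j c.blocks).map (fun i => (X : Polynomial C) ^ i) := by
        intro c j
        rw [map_insL]
        norm_num
      have h2l : ∀ (c : Composition n) (j : ℕ),
          modL (· * X) j (c.blocks.map (fun i => (X : Polynomial C) ^ i))
            = (modL (· + 1) j c.blocks).map (fun i => (X : Polynomial C) ^ i) := by
        intro c j
        rw [map_modL (fun i => (X : Polynomial C) ^ i) (· + 1) (· * X) (fun a => pow_succ X a)]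
      have hL : ∀ c : Composition n,
          ((Ml c.blocks : C) * lam ^ (n - c.blocks.length)) •
              mixShuffle lam
                ((1 : Polynomial C) :: c.blocks.map (fun i => (X : Polynomial C) ^ i)) [1, X]
            = (∑ j ∈ Finset.range (c.blocks.length + 1),
                Finsupp.single
                  ((1 : Polynomial C) :: (insL 1 j c.blocks).map (fun i => (X : Polynomial C) ^ i))
                  ((Ml c.blocks : C) * lam ^ (n - c.blocks.length)))
              + ∑ j ∈ Finset.range c.blocks.length,
                Finsupp.single
                  ((1 : Polynomial C) :: (modL (· + 1) j c.blocks).map (fun i => (X : Polynomial C) ^ i))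
                  ((Ml c.blocks : C) * lam ^ (n - c.blocks.length) * lam) := by
        intro c
        rw [shuffle_main lam X _ (by simp [hbne c])]
        simp only [List.length_map]
        simp only [h1l c, h2l c]
        rw [smul_add, smul_smul, Finset.smul_sum, Finset.smul_sum]
        simp only [Finsupp.smul_single, smul_eq_mul, mul_one]
      rw [Finset.sum_congr rfl (fun c _ => hL c), Finset.sum_add_distrib]
      have hpas : ∀ c' : Composition (n + 1),
          Finsupp.single
              ((1 : Polynomial C) :: c'.blocks.map (fun i => (X : Polynomial C) ^ i))
              ((Ml c'.blocks : C) * lam ^ (n + 1 - c'.blocks.length))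
            = (∑ j ∈ (Finset.range c'.blocks.length).filter (fun j => c'.blocks.getD j 0 = 1),
                Finsupp.single
                  ((1 : Polynomial C) :: c'.blocks.map (fun i => (X : Polynomial C) ^ i))
                  ((Ml (modL (· - 1) j c'.blocks) : C) * lam ^ (n + 1 - c'.blocks.length)))
              + ∑ j ∈ (Finset.range c'.blocks.length).filter (fun j => ¬ c'.blocks.getD j 0 = 1),
                Finsupp.single
                  ((1 : Polynomial C) :: c'.blocks.map (fun i => (X : Polynomial C) ^ i))
                  ((Ml (modL (· - 1) j c'.blocks) : C) * lam ^ (n + 1 - c'.blocks.length)) := by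
        intro c'
        have hp := pascal c'.blocks (blocks_ne_nil (by omega) c') (fun x hx => c'.blocks_pos hx)
        rw [Finset.sum_filter_add_sum_filter_not]
        rw [← Finsupp.single_finset_sum, ← Finset.sum_mul, ← Nat.cast_sum, hp]
      rw [Finset.sum_congr rfl (fun c' _ => hpas c'), Finset.sum_add_distrib]
      congr 1
      · -- insertion part
        rw [Finset.sum_sigma', Finset.sum_sigma']
        refine Finset.sum_bij' (fun a _ => ⟨insC a.1 a.2, a.2⟩)
          (fun b hb => ⟨delC b.1 b.2
            (by have h := Finset.mem_sigma.mp hb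
                have h2 := Finset.mem_filter.mp h.2
                exact Finset.mem_range.mp h2.1)
            (by have h := Finset.mem_sigma.mp hb
                exact (Finset.mem_filter.mp h.2).2), b.2⟩) ?_ ?_ ?_ ?_ ?_
        · intro a ha
          have hj : a.2 < a.1.blocks.length + 1 :=
            Finset.mem_range.mp (Finset.mem_sigma.mp ha).2
          rw [Finset.mem_sigma, Finset.mem_filter, Finset.mem_range]
          refine ⟨Finset.mem_univ _, ?_, ?_⟩
          · show a.2 < (insL 1 a.2 a.1.blocks).length
            rw [length_insL]
            omega
          · exact getD_insL 1 0 a.2 a.1.blocks (by omega)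
        · intro b hb
          have h := Finset.mem_sigma.mp hb
          have h2 := Finset.mem_filter.mp h.2
          have hj := Finset.mem_range.mp h2.1
          simp only [Finset.mem_sigma, Finset.mem_range]
          refine ⟨Finset.mem_univ _, ?_⟩
          show b.2 < (delL b.2 b.1.blocks).length + 1
          rw [length_delL b.2 b.1.blocks hj]
          exact hj
        · intro a ha
          obtain ⟨c, j⟩ := a
          simp only [delC_insC]
        · intro b hb
          obtain ⟨c', j⟩ := b
          simp only [insC_delC]
        · intro a ha
          obtain ⟨c, j⟩ := a
          have hj : j < c.blocks.length + 1 :=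
            Finset.mem_range.mp (Finset.mem_sigma.mp ha).2
          show Finsupp.single _ _ = Finsupp.single _ _
          have hdec : Ml (modL (· - 1) j (insC c j).blocks) = Ml c.blocks :=
            Ml_dec_insL (by omega)
          have hlen : (insC c j).blocks.length = c.blocks.length + 1 := length_insL 1 j c.blocks
          rw [hdec, hlen, Nat.succ_sub_succ]
          rfl
      · -- merge part
        rw [Finset.sum_sigma', Finset.sum_sigma']
        refine Finset.sum_bij'
          (fun a ha => ⟨incC a.1 a.2 (Finset.mem_range.mp (Finset.mem_sigma.mp ha).2), a.2⟩)
          (fun b hb => ⟨decC b.1 b.2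
            (by have h := Finset.mem_sigma.mp hb
                exact Finset.mem_range.mp (Finset.mem_filter.mp h.2).1)
            (by have h := Finset.mem_sigma.mp hb
                have h2 := Finset.mem_filter.mp h.2
                have hj := Finset.mem_range.mp h2.1
                have hpos := b.1.blocks_pos (getD_mem b.2 b.1.blocks hj)
                have := h2.2
                omega), b.2⟩) ?_ ?_ ?_ ?_ ?_
        · intro a ha
          have hj : a.2 < a.1.blocks.length :=
            Finset.mem_range.mp (Finset.mem_sigma.mp ha).2
          simp only [Finset.mem_sigma, Finset.mem_filter, Finset.mem_range]
          refine ⟨Finset.mem_univ _, ?_, ?_⟩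
          · show a.2 < (modL (· + 1) a.2 a.1.blocks).length
            rw [length_modL]
            exact hj
          · show ¬ (modL (· + 1) a.2 a.1.blocks).getD a.2 0 = 1
            rw [getD_modL _ _ _ _ hj]
            have hpos := a.1.blocks_pos (getD_mem a.2 a.1.blocks hj)
            omega
        · intro b hb
          have h := Finset.mem_sigma.mp hb
          have hj := Finset.mem_range.mp (Finset.mem_filter.mp h.2).1
          simp only [Finset.mem_sigma, Finset.mem_range]
          refine ⟨Finset.mem_univ _, ?_⟩
          show b.2 < (modL (· - 1) b.2 b.1.blocks).length
          rw [length_modL]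
          exact hj
        · intro a ha
          obtain ⟨c, j⟩ := a
          simp only [decC_incC]
        · intro b hb
          obtain ⟨c', j⟩ := b
          simp only [incC_decC]
        · intro a ha
          obtain ⟨c, j⟩ := a
          have hj : j < c.blocks.length :=
            Finset.mem_range.mp (Finset.mem_sigma.mp ha).2
          show Finsupp.single _ _ = Finsupp.single _ _
          have hdec : Ml (modL (· - 1) j (incC c j hj).blocks) = Ml c.blocks := by
            show Ml (modL (· - 1) j (modL (· + 1) j c.blocks)) = Ml c.blocks
            rw [modL_cancel]
          have hlen : (incC c j hj).blocks.length = c.blocks.length := length_modL _ _ _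
          rw [hdec, hlen]
          have hle : c.blocks.length ≤ n := c.length_le
          rw [mul_assoc, ← pow_succ, show n - c.blocks.length + 1 = n + 1 - c.blocks.length by omega]
          rfl

end MixAux

open Polynomial in
/-- In the free Baxter algebra of weight `λ` on one generator `x` (the mixable shuffle algebra
on `C[x]`), for `n ≥ 1`:
`(1⊗x)^n = ∑_I (n choose i₁,…,i_k) λ^{n-k} · (1 ⊗ x^{i₁} ⊗ ⋯ ⊗ x^{i_k})`,
the sum being over compositions `I = (i₁,…,i_k)` of `n` into positive parts. -/
theorem mixShuffle_pow_one_tensor_x {C : Type*} [CommRing C] (lam : C) (n : ℕ) (hn : 1 ≤ n) :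
    mixShufflePow lam (Finsupp.single [(1 : Polynomial C), X] (1 : C)) n =
      ∑ c : Composition n,
        Finsupp.single ((1 : Polynomial C) :: c.blocks.map (fun i => (X : Polynomial C) ^ i))
          ((Nat.multinomial Finset.univ c.blocksFun : C) * lam ^ (n - c.length)) := by
  exact MixAux.aux lam n hn
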